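/- For r ∈ (−∞,1], the power mean M_{r,K}(e₁,…,e_K) = ((e₁^r+⋯+e_K^r)/K)^{1/r} is an e-merging function; for r ∈ (1,∞), the function K^{1/r−1}·M_{r,K} = K^{−1}(e₁^r+⋯+e_K^r)^{1/r} is an e-merging function. In both cases the function is pointwise dominated by the arithmetic mean M_K. -/

import Mathlib

open MeasureTheory
open scoped ENNReal NNReal BigOperators

/-- An e-merging function with values in `[0,∞]` (arbitrary dependence). -/
def IsEMergingE (K : ℕ) (F : (Fin K → ℝ≥0∞) → ℝ≥0∞) : Prop :=
  Monotone F ∧ Measurable F ∧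
  ∀ (Ω : Type) [MeasurableSpace Ω] (Q : Measure Ω), IsProbabilityMeasure Q →
    ∀ E : Fin K → Ω → ℝ≥0∞, (∀ k, Measurable (E k)) →
      (∀ k, ∫⁻ ω, E k ω ∂Q ≤ 1) →
      ∫⁻ ω, F (fun k => E k ω) ∂Q ≤ 1

private lemma pme_rpow_anti {r : ℝ} (hr : r ≤ 0) : Antitone (fun x : ℝ≥0∞ => x ^ r) := by
  intro x y hxy
  simp only
  have hx : x ^ r = (x ^ (-r))⁻¹ := by rw [← ENNReal.rpow_neg, neg_neg]
  have hy : y ^ r = (y ^ (-r))⁻¹ := by rw [← ENNReal.rpow_neg, neg_neg]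
  rw [hx, hy]
  exact ENNReal.inv_le_inv' (ENNReal.rpow_le_rpow hxy (by linarith : (0:ℝ) ≤ -r))

private lemma pme_div_as_sum {K : ℕ} (a : Fin K → ℝ≥0∞) :
    (∑ k, a k) / (K : ℝ≥0∞) = ∑ k, ((K : ℝ≥0∞))⁻¹ * a k := by
  rw [div_eq_mul_inv, Finset.sum_mul]
  simp [mul_comm]

private lemma pme_sum_inv {K : ℕ} (hK : K ≠ 0) : ∑ _k : Fin K, ((K : ℝ≥0∞))⁻¹ = 1 := by
  rw [Finset.sum_const, Finset.card_univ, Fintype.card_fin, nsmul_eq_mul]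
  exact ENNReal.mul_inv_cancel (by exact_mod_cast hK) (ENNReal.natCast_ne_top K)

private lemma pme_sum_rpow_le_rpow_sum {ι} (s : Finset ι) (f : ι → ℝ≥0∞) {r : ℝ} (hr : 1 ≤ r) :
    ∑ i ∈ s, f i ^ r ≤ (∑ i ∈ s, f i) ^ r := by
  induction s using Finset.cons_induction with
  | empty => simp [ENNReal.zero_rpow_of_pos (lt_of_lt_of_le zero_lt_one hr)]
  | cons a s ha ih =>
    simp only [Finset.sum_cons]
    calc f a ^ r + ∑ i ∈ s, f i ^ r ≤ f a ^ r + (∑ i ∈ s, f i) ^ r := add_le_add le_rfl ih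
    _ ≤ (f a + ∑ i ∈ s, f i) ^ r := ENNReal.add_rpow_le_rpow_add _ _ hr

private lemma pme_nn_neg {K : ℕ} (hK : K ≠ 0) {r : ℝ} (hr : r < 0) (f : Fin K → ℝ≥0)
    (hf : ∀ k, f k ≠ 0) :
    ((∑ k, f k ^ r) / (K : ℝ≥0)) ^ (1 / r) ≤ (∑ k, f k) / (K : ℝ≥0) := by
  have hK0 : ((K : ℝ≥0)) ≠ 0 := Nat.cast_ne_zero.mpr hK
  have hw : ∑ _k : Fin K, ((K : ℝ≥0))⁻¹ = 1 := by
    rw [Finset.sum_const, Finset.card_univ, Fintype.card_fin, nsmul_eq_mul]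
    exact mul_inv_cancel₀ hK0
  have hdiv : ∀ a : Fin K → ℝ≥0, (∑ k, a k) / (K : ℝ≥0) = ∑ k, ((K : ℝ≥0))⁻¹ * a k := by
    intro a
    rw [div_eq_mul_inv, Finset.sum_mul]
    simp [mul_comm]
  have hcoe : (((K : ℝ≥0))⁻¹ : ℝ) = ((K : ℝ))⁻¹ := by push_cast; ring
  set G : ℝ≥0 := ∏ k, f k ^ ((K : ℝ))⁻¹ with hG
  have hGpos : 0 < G := Finset.prod_pos fun k _ =>
    NNReal.rpow_pos ((pos_iff_ne_zero.mpr (hf k)))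
  have hAM : G ≤ ∑ k, ((K : ℝ≥0))⁻¹ * f k := by
    have h := NNReal.geom_mean_le_arith_mean_weighted Finset.univ
      (fun _ : Fin K => ((K : ℝ≥0))⁻¹) f hw
    simpa [hcoe] using h
  have hGM : G ^ r ≤ ∑ k, ((K : ℝ≥0))⁻¹ * f k ^ r := by
    have h := NNReal.geom_mean_le_arith_mean_weighted Finset.univ
      (fun _ : Fin K => ((K : ℝ≥0))⁻¹) (fun k => f k ^ r) hw
    simp only [NNReal.coe_inv, hcoe] at h
    calc G ^ r = ∏ k, (f k ^ r) ^ ((K : ℝ))⁻¹ := by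
          rw [hG, ← NNReal.finset_prod_rpow]
          refine Finset.prod_congr rfl fun k _ => ?_
          rw [← NNReal.rpow_mul, ← NNReal.rpow_mul, mul_comm]
      _ ≤ _ := h
  have hS : 0 < ∑ k, ((K : ℝ≥0))⁻¹ * f k ^ r :=
    lt_of_lt_of_le (NNReal.rpow_pos hGpos) hGM
  have key : (∑ k, ((K : ℝ≥0))⁻¹ * f k ^ r) ^ (1 / r) ≤ G := by
    have hGr : (G ^ r) ^ (1 / r) = G := by
      rw [← NNReal.rpow_mul, mul_one_div_cancel (ne_of_lt hr), NNReal.rpow_one]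
    rw [← hGr]
    exact (NNReal.rpow_le_rpow_iff_of_neg hS (NNReal.rpow_pos hGpos)
      (one_div_neg.mpr hr)).mpr hGM
  calc ((∑ k, f k ^ r) / (K : ℝ≥0)) ^ (1 / r)
      = (∑ k, ((K : ℝ≥0))⁻¹ * f k ^ r) ^ (1 / r) := by rw [hdiv]
    _ ≤ G := key
    _ ≤ ∑ k, ((K : ℝ≥0))⁻¹ * f k := hAM
    _ = (∑ k, f k) / (K : ℝ≥0) := (hdiv f).symm

private lemma pme_neg {K : ℕ} (hK : K ≠ 0) {r : ℝ} (hr : r < 0) (e : Fin K → ℝ≥0∞) :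
    ((∑ k, e k ^ r) / (K : ℝ≥0∞)) ^ (1 / r) ≤ (∑ k, e k) / (K : ℝ≥0∞) := by
  have hKt : (K : ℝ≥0∞) ≠ ⊤ := ENNReal.natCast_ne_top K
  have h1r : 1 / r < 0 := one_div_neg.mpr hr
  by_cases h0 : ∃ k, e k = 0
  · obtain ⟨k, hk⟩ := h0
    have htop : ∑ j, e j ^ r = ⊤ := by
      refine ENNReal.sum_eq_top.mpr ⟨k, Finset.mem_univ k, ?_⟩
      rw [hk]; exact ENNReal.zero_rpow_of_neg hr
    rw [htop, ENNReal.top_div_of_ne_top hKt, ENNReal.top_rpow_of_neg h1r]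
    exact zero_le
  by_cases ht : ∃ k, e k = ⊤
  · obtain ⟨k, hk⟩ := ht
    have htop : ∑ j, e j = ⊤ := ENNReal.sum_eq_top.mpr ⟨k, Finset.mem_univ k, hk⟩
    rw [htop, ENNReal.top_div_of_ne_top hKt]
    exact le_top
  push_neg at h0 ht
  set f : Fin K → ℝ≥0 := fun k => (e k).toNNReal with hfdef
  have hfe : ∀ k, e k = (f k : ℝ≥0∞) := fun k => (ENNReal.coe_toNNReal (ht k)).symm
  have hf0 : ∀ k, f k ≠ 0 := by
    intro k h
    exact h0 k (by rw [hfe k, h, ENNReal.coe_zero])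
  have hKcoe : (K : ℝ≥0∞) = (((K : ℝ≥0)) : ℝ≥0∞) := by push_cast; rfl
  have hK0' : ((K : ℝ≥0)) ≠ 0 := Nat.cast_ne_zero.mpr hK
  have hsum0 : (∑ k, f k ^ r) ≠ 0 := by
    intro h
    have : f ⟨0, Nat.pos_of_ne_zero hK⟩ ^ r = 0 :=
      le_antisymm (h ▸ Finset.single_le_sum (f := fun i => f i ^ r) (fun i _ => zero_le)
        (Finset.mem_univ _)) zero_le
    exact (NNReal.rpow_pos (pos_iff_ne_zero.mpr (hf0 _))).ne' this
  have lhs_eq : ((∑ k, e k ^ r) / (K : ℝ≥0∞)) ^ (1 / r)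
      = ((((∑ k, f k ^ r) / (K : ℝ≥0)) ^ (1 / r) : ℝ≥0) : ℝ≥0∞) := by
    have h1 : ∑ k, e k ^ r = ((∑ k, f k ^ r : ℝ≥0) : ℝ≥0∞) := by
      rw [ENNReal.coe_finset_sum]
      exact Finset.sum_congr rfl fun k _ => by
        rw [hfe k, ENNReal.coe_rpow_of_ne_zero (hf0 k)]
    rw [h1, hKcoe, ← ENNReal.coe_div hK0', ENNReal.coe_rpow_of_ne_zero]
    exact div_ne_zero hsum0 hK0'
  have rhs_eq : (∑ k, e k) / (K : ℝ≥0∞) = ((((∑ k, f k) / (K : ℝ≥0)) : ℝ≥0) : ℝ≥0∞) := by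
    have h1 : ∑ k, e k = ((∑ k, f k : ℝ≥0) : ℝ≥0∞) := by
      rw [ENNReal.coe_finset_sum]
      exact Finset.sum_congr rfl fun k _ => hfe k
    rw [h1, hKcoe, ← ENNReal.coe_div hK0']
  rw [lhs_eq, rhs_eq, ENNReal.coe_le_coe]
  exact pme_nn_neg hK hr f hf0

private lemma pme_pos {K : ℕ} (hK : K ≠ 0) {r : ℝ} (hr0 : 0 < r) (hr1 : r ≤ 1)
    (e : Fin K → ℝ≥0∞) :
    ((∑ k, e k ^ r) / (K : ℝ≥0∞)) ^ (1 / r) ≤ (∑ k, e k) / (K : ℝ≥0∞) := by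
  have hp : (1:ℝ) ≤ 1 / r := by rw [le_div_iff₀ hr0]; linarith
  have h := ENNReal.rpow_arith_mean_le_arith_mean_rpow Finset.univ
    (fun _ : Fin K => ((K : ℝ≥0∞))⁻¹) (fun k => e k ^ r) (pme_sum_inv hK) hp
  have hz : ∀ k : Fin K, (e k ^ r) ^ (1 / r) = e k := fun k => by
    rw [← ENNReal.rpow_mul, mul_one_div_cancel (ne_of_gt hr0), ENNReal.rpow_one]
  rw [pme_div_as_sum (fun k => e k ^ r), pme_div_as_sum e]
  calc (∑ k, ((K:ℝ≥0∞))⁻¹ * e k ^ r) ^ (1 / r)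
      ≤ ∑ k, ((K:ℝ≥0∞))⁻¹ * (e k ^ r) ^ (1/r) := h
    _ = ∑ k, ((K:ℝ≥0∞))⁻¹ * e k := by simp_rw [hz]

private lemma pme_gt1 {K : ℕ} {r : ℝ} (hr : 1 < r) (e : Fin K → ℝ≥0∞) :
    (∑ k, e k ^ r) ^ (1 / r) / (K : ℝ≥0∞) ≤ (∑ k, e k) / (K : ℝ≥0∞) := by
  refine ENNReal.div_le_div_right ?_ _
  calc (∑ k, e k ^ r) ^ (1 / r) ≤ ((∑ k, e k) ^ r) ^ (1 / r) :=
        ENNReal.rpow_le_rpow (pme_sum_rpow_le_rpow_sum _ _ hr.le) (by positivity)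
    _ = ∑ k, e k := by
        rw [← ENNReal.rpow_mul, mul_one_div_cancel (by linarith : r ≠ 0), ENNReal.rpow_one]

private lemma pme_lintegral {K : ℕ} (hK : K ≠ 0) {Ω : Type} [MeasurableSpace Ω] (Q : Measure Ω)
    (E : Fin K → Ω → ℝ≥0∞) (hE : ∀ k, Measurable (E k))
    (h1 : ∀ k, ∫⁻ ω, E k ω ∂Q ≤ 1) :
    ∫⁻ ω, (∑ k, E k ω) / (K : ℝ≥0∞) ∂Q ≤ 1 := by
  have hKt : (K : ℝ≥0∞) ≠ ⊤ := ENNReal.natCast_ne_top K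
  have hK0 : (K : ℝ≥0∞) ≠ 0 := Nat.cast_ne_zero.mpr hK
  have heq : ∫⁻ ω, (∑ k, E k ω) / (K : ℝ≥0∞) ∂Q = (∑ k, ∫⁻ ω, E k ω ∂Q) / (K : ℝ≥0∞) := by
    simp_rw [div_eq_mul_inv]
    rw [lintegral_mul_const' _ _ (by simp [hK]), lintegral_finset_sum _ (fun k _ => hE k)]
  rw [heq]
  have hle : (∑ k, ∫⁻ ω, E k ω ∂Q) ≤ (K : ℝ≥0∞) := by
    calc (∑ k, ∫⁻ ω, E k ω ∂Q) ≤ ∑ _k : Fin K, (1:ℝ≥0∞) :=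
          Finset.sum_le_sum fun k _ => h1 k
      _ = (K : ℝ≥0∞) := by simp
  calc (∑ k, ∫⁻ ω, E k ω ∂Q) / (K : ℝ≥0∞) ≤ (K : ℝ≥0∞) / (K : ℝ≥0∞) :=
        ENNReal.div_le_div_right hle _
    _ = 1 := ENNReal.div_self hK0 hKt

private lemma pme_meas1 {K : ℕ} (r : ℝ) :
    Measurable (fun e : Fin K → ℝ≥0∞ => ((∑ k, e k ^ r) / (K : ℝ≥0∞)) ^ (1 / r)) := by
  apply (ENNReal.continuous_rpow_const.measurable).comp
  apply Measurable.div_const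
  exact Finset.measurable_sum _ fun k _ =>
    (ENNReal.continuous_rpow_const.measurable).comp (measurable_pi_apply k)

private lemma pme_meas2 {K : ℕ} (r : ℝ) :
    Measurable (fun e : Fin K → ℝ≥0∞ => (∑ k, e k ^ r) ^ (1 / r) / (K : ℝ≥0∞)) := by
  apply Measurable.div_const
  apply (ENNReal.continuous_rpow_const.measurable).comp
  exact Finset.measurable_sum _ fun k _ =>
    (ENNReal.continuous_rpow_const.measurable).comp (measurable_pi_apply k)

/-- for `r ∈ (−∞,1]`, `r ≠ 0`, the power mean
`M_{r,K}(e) = ((e₁^r+⋯+e_K^r)/K)^{1/r}` is an e-merging function; for `r > 1`,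
`K^{1/r−1}·M_{r,K}(e) = (e₁^r+⋯+e_K^r)^{1/r}/K` is an e-merging function. In both
cases the function is pointwise dominated by the arithmetic mean. -/
theorem power_mean_e_merging (K : ℕ) (hK : 2 ≤ K) :
    (∀ r : ℝ, r ≠ 0 → r ≤ 1 →
      IsEMergingE K (fun e => ((∑ k, e k ^ r) / (K : ℝ≥0∞)) ^ (1 / r)) ∧
      ∀ e : Fin K → ℝ≥0∞,
        ((∑ k, e k ^ r) / (K : ℝ≥0∞)) ^ (1 / r) ≤ (∑ k, e k) / (K : ℝ≥0∞)) ∧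
    (∀ r : ℝ, 1 < r →
      IsEMergingE K (fun e => (∑ k, e k ^ r) ^ (1 / r) / (K : ℝ≥0∞)) ∧
      ∀ e : Fin K → ℝ≥0∞,
        (∑ k, e k ^ r) ^ (1 / r) / (K : ℝ≥0∞) ≤ (∑ k, e k) / (K : ℝ≥0∞)) := by
  have hK0 : K ≠ 0 := by omega
  constructor
  · intro r hr0 hr1
    have hbnd : ∀ e : Fin K → ℝ≥0∞,
        ((∑ k, e k ^ r) / (K : ℝ≥0∞)) ^ (1 / r) ≤ (∑ k, e k) / (K : ℝ≥0∞) := by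
      intro e
      rcases lt_or_gt_of_ne hr0 with hneg | hpos
      · exact pme_neg hK0 hneg e
      · exact pme_pos hK0 hpos hr1 e
    refine ⟨⟨?_, pme_meas1 r, ?_⟩, hbnd⟩
    · -- Monotone
      intro a b hab
      simp only
      rcases lt_or_gt_of_ne hr0 with hneg | hpos
      · refine pme_rpow_anti (by rw [one_div]; exact (inv_nonpos).mpr hneg.le) ?_
        refine ENNReal.div_le_div_right ?_ _
        exact Finset.sum_le_sum fun k _ => pme_rpow_anti hneg.le (hab k)
      · refine ENNReal.rpow_le_rpow ?_ (by positivity)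
        refine ENNReal.div_le_div_right ?_ _
        exact Finset.sum_le_sum fun k _ => ENNReal.rpow_le_rpow (hab k) hpos.le
    · -- integral
      intro Ω _ Q hQ E hE h1
      calc ∫⁻ ω, ((∑ k, E k ω ^ r) / (K : ℝ≥0∞)) ^ (1 / r) ∂Q
          ≤ ∫⁻ ω, (∑ k, E k ω) / (K : ℝ≥0∞) ∂Q := lintegral_mono fun ω => hbnd _
        _ ≤ 1 := pme_lintegral hK0 Q E hE h1
  · intro r hr
    have hbnd : ∀ e : Fin K → ℝ≥0∞,
        (∑ k, e k ^ r) ^ (1 / r) / (K : ℝ≥0∞) ≤ (∑ k, e k) / (K : ℝ≥0∞) :=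
      fun e => pme_gt1 hr e
    refine ⟨⟨?_, pme_meas2 r, ?_⟩, hbnd⟩
    · intro a b hab
      simp only
      refine ENNReal.div_le_div_right ?_ _
      refine ENNReal.rpow_le_rpow ?_ (by positivity)
      exact Finset.sum_le_sum fun k _ => ENNReal.rpow_le_rpow (hab k) (by linarith)
    · intro Ω _ Q hQ E hE h1
      calc ∫⁻ ω, (∑ k, E k ω ^ r) ^ (1 / r) / (K : ℝ≥0∞) ∂Q
          ≤ ∫⁻ ω, (∑ k, E k ω) / (K : ℝ≥0∞) ∂Q := lintegral_mono fun ω => hbnd _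
        _ ≤ 1 := pme_lintegral hK0 Q E hE h1
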